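/- (Orthogonality and unitarity relations for the Berezin–Weil–Zak transform.) For all λ₁, λ₂ ∈ ℤ∖{0}, all q₁, q₂ ∈ ℤ, and all Schwartz functions h₁, h₂ : ℝ → ℂ, one has ∫_{[0,1]³} BWZ_{λ₁,q₁}(h₁)(a,b,c) · conj(BWZ_{λ₂,q₂}(h₂)(a,b,c)) da db dc = ∫_ℝ h₁(u) conj(h₂(u)) du if λ₁ = λ₂ and q₁ ≡ q₂ (mod λ₁), and = 0 otherwise. -/

import Mathlib

set_option maxHeartbeats 1000000

open MeasureTheory Real Complex
open scoped ComplexConjugate Classical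

/-- The generalised Berezin–Weil–Zak transform
`BWZ_{λ,q}(h)(a,b,c) = (√|λ|/λ) ∑_{k∈ℤ} e^{-2πiqk/λ} e^{2πi(λc+kb)} h(k/λ + a)`. -/
noncomputable def BWZ (lam q : ℤ) (h : ℝ → ℂ) (x : ℝ × ℝ × ℝ) : ℂ :=
  ((Real.sqrt |(lam : ℝ)| : ℝ) / (lam : ℝ) : ℝ) *
    ∑' k : ℤ, Complex.exp (-(2 * (π : ℂ) * Complex.I * (q : ℂ) * (k : ℂ)) / (lam : ℂ)) *
      Complex.exp (2 * (π : ℂ) * Complex.I * ((lam : ℂ) * (x.2.2 : ℂ) + (k : ℂ) * (x.2.1 : ℂ))) *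
      h ((k : ℝ) / (lam : ℝ) + x.1)


noncomputable def eR (r : ℝ) : ℂ := Complex.exp ((r : ℂ) * Complex.I)

lemma eR_norm (r : ℝ) : ‖eR r‖ = 1 := by
  simp [eR, Complex.norm_exp_ofReal_mul_I]

lemma eR_conj (r : ℝ) : conj (eR r) = eR (-r) := by
  simp only [eR, ← Complex.exp_conj, map_mul, Complex.conj_ofReal, Complex.conj_I]
  push_cast; ring_nf

lemma eR_add (r s : ℝ) : eR (r + s) = eR r * eR s := by
  simp only [eR, ← Complex.exp_add]; push_cast; ring_nf

lemma eR_int (z : ℤ) : eR (2 * π * z) = 1 := by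
  have : ((2 * π * (z:ℝ) : ℝ) : ℂ) * Complex.I = (z : ℂ) * (2 * π * Complex.I) := by
    push_cast; ring
  rw [eR, this, Complex.exp_int_mul_two_pi_mul_I]

lemma eR_pow (r : ℝ) (j : ℕ) : eR r ^ j = eR (j * r) := by
  simp only [eR, ← Complex.exp_nat_mul]; push_cast; ring_nf

lemma summable_inv_one_add_sq : Summable fun k : ℤ => 1 / (1 + (k : ℝ) ^ 2) := by
  have h1 : Summable fun k : ℤ => 1 / (k : ℝ) ^ 2 :=
    Real.summable_one_div_int_pow.mpr one_lt_two
  have h2 : Summable fun k : ℤ => (if k = 0 then (1:ℝ) else 0) := by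
    apply summable_of_ne_finset_zero (s := {0})
    intro b hb; simp only [Finset.mem_singleton] at hb; simp [hb]
  refine Summable.of_nonneg_of_le (fun k => by positivity) (fun k => ?_) (h2.add h1)
  by_cases hk : k = 0
  · subst hk; simp
  · have hk2 : (0:ℝ) < (k:ℝ)^2 := by
      have : (k:ℝ) ≠ 0 := Int.cast_ne_zero.mpr hk
      positivity
    simp only [hk, if_false, zero_add]
    apply one_div_le_one_div_of_le hk2; linarith

lemma schwartz_decay_bound (h : SchwartzMap ℝ ℂ) :
    ∃ C : ℝ, 0 ≤ C ∧ ∀ x : ℝ, ‖h x‖ * (1 + x ^ 2) ≤ C := by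
  obtain ⟨C0, hC0pos, hC0⟩ := h.decay 0 0
  obtain ⟨C2, hC2pos, hC2⟩ := h.decay 2 0
  refine ⟨C0 + C2, by positivity, fun x => ?_⟩
  have h0 := hC0 x
  have h2 := hC2 x
  simp only [pow_zero, one_mul, norm_iteratedFDeriv_zero, Real.norm_eq_abs, sq_abs] at h0 h2
  nlinarith [norm_nonneg (h x)]

lemma bound_shift (h : SchwartzMap ℝ ℂ) (lam : ℤ) (hlam : lam ≠ 0) :
    ∃ C : ℝ, 0 ≤ C ∧ ∀ (k : ℤ) (a : ℝ), a ∈ Set.Icc (0:ℝ) 1 →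
      ‖h ((k:ℝ)/(lam:ℝ) + a)‖ ≤ C / (1 + (k:ℝ)^2) := by
  obtain ⟨C, hC0, hC⟩ := schwartz_decay_bound h
  have hlamR : (lam : ℝ) ≠ 0 := Int.cast_ne_zero.mpr hlam
  refine ⟨C * (1 + 4 * (lam:ℝ)^2), by positivity, fun k a ha => ?_⟩
  set x : ℝ := (k:ℝ)/(lam:ℝ) + a with hx
  have hk : (k:ℝ) = (lam:ℝ) * (x - a) := by rw [hx]; field_simp; ring
  have hb := hC x
  have ha0 : 0 ≤ a := ha.1
  have ha1 : a ≤ 1 := ha.2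
  have hpos : (0:ℝ) < 1 + (k:ℝ)^2 := by positivity
  rw [le_div_iff₀ hpos]
  have hnn : 0 ≤ ‖h x‖ := norm_nonneg _
  have hk2 : (k:ℝ)^2 = (lam:ℝ)^2 * (x-a)^2 := by rw [hk]; ring
  have h1 : ‖h x‖ * x^2 ≤ C := by nlinarith
  have h2 : ‖h x‖ ≤ C := by nlinarith [mul_nonneg hnn (sq_nonneg x)]
  have ha2 : a^2 ≤ 1 := by nlinarith
  have h4 : ‖h x‖ * a^2 ≤ C := by nlinarith [mul_le_mul_of_nonneg_left ha2 hnn]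
  have h3 : ‖h x‖ * (x-a)^2 ≤ 4 * C := by nlinarith [mul_nonneg hnn (sq_nonneg (x+a))]
  have h5 : (lam:ℝ)^2 * (‖h x‖ * (x-a)^2) ≤ (lam:ℝ)^2 * (4*C) :=
    mul_le_mul_of_nonneg_left h3 (sq_nonneg _)
  nlinarith [h5]

lemma summable_shift (h : SchwartzMap ℝ ℂ) (lam : ℤ) (hlam : lam ≠ 0)
    {a : ℝ} (ha : a ∈ Set.Icc (0:ℝ) 1) :
    Summable fun k : ℤ => ‖h ((k:ℝ)/(lam:ℝ) + a)‖ := by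
  obtain ⟨C, hC0, hC⟩ := bound_shift h lam hlam
  refine Summable.of_nonneg_of_le (fun k => norm_nonneg _) (fun k => ?_)
    (summable_inv_one_add_sq.mul_left C)
  simpa [div_eq_mul_inv, mul_one_div] using hC k a ha


noncomputable def zterm (lam q : ℤ) (h : ℝ → ℂ) (a b : ℝ) (k : ℤ) : ℂ :=
  eR (-(2 * π * q * k) / lam) * eR (2 * π * k * b) * h ((k:ℝ)/(lam:ℝ) + a)

lemma BWZ_eq (lam q : ℤ) (h : ℝ → ℂ) (a b c : ℝ) :
    BWZ lam q h (a, b, c) =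
      ((Real.sqrt |(lam : ℝ)| / (lam : ℝ) : ℝ) : ℂ) *
        (eR (2 * π * lam * c) * ∑' k : ℤ, zterm lam q h a b k) := by
  unfold BWZ zterm eR
  congr 1
  rw [← tsum_mul_left]
  apply tsum_congr
  intro k
  rw [show (2 * (π : ℂ) * Complex.I * ((lam : ℂ) * (c : ℂ) + (k : ℂ) * (b : ℂ)))
      = ((2 * π * (lam:ℝ) * c : ℝ) : ℂ) * Complex.I + ((2 * π * (k:ℝ) * b : ℝ) : ℂ) * Complex.I by
    push_cast; ring]
  rw [show (-(2 * (π : ℂ) * Complex.I * (q : ℂ) * (k : ℂ)) / (lam : ℂ))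
      = ((-(2 * π * (q:ℝ) * (k:ℝ)) / (lam:ℝ) : ℝ) : ℂ) * Complex.I by
    push_cast; ring]
  rw [Complex.exp_add]
  ring

lemma zterm_norm (lam q : ℤ) (h : ℝ → ℂ) (a b : ℝ) (k : ℤ) :
    ‖zterm lam q h a b k‖ = ‖h ((k:ℝ)/(lam:ℝ) + a)‖ := by
  simp only [zterm, norm_mul, eR_norm, one_mul]

lemma intE (n : ℤ) :
    (∫ c in Set.Icc (0:ℝ) 1, eR (2 * π * n * c)) = if n = 0 then 1 else 0 := by
  rw [MeasureTheory.integral_Icc_eq_integral_Ioc,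
    ← intervalIntegral.integral_of_le (zero_le_one (α := ℝ))]
  by_cases hn : n = 0
  · subst hn; simp [eR]
  · rw [if_neg hn]
    have hrw : ∀ x : ℝ, eR (2 * π * n * x) = Complex.exp ((2 * π * n * Complex.I) * x) := by
      intro x; unfold eR; congr 1; push_cast; ring
    simp_rw [hrw]
    have hc : (2 * (π:ℂ) * n * Complex.I) ≠ 0 := by
      simp [Real.pi_ne_zero, Complex.I_ne_zero, hn]
    rw [integral_exp_mul_complex hc]
    simp only [Complex.ofReal_one, Complex.ofReal_zero, mul_one, mul_zero, Complex.exp_zero]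
    rw [show (2 * (π:ℂ) * n * Complex.I) = (n : ℂ) * (2 * π * Complex.I) by ring,
      Complex.exp_int_mul_two_pi_mul_I]
    simp




lemma stepB (lam : ℤ) (hlam : lam ≠ 0) (q₁ q₂ : ℤ) (h₁ h₂ : SchwartzMap ℝ ℂ)
    {a : ℝ} (ha : a ∈ Set.Icc (0:ℝ) 1) :
    (∫ b in Set.Icc (0:ℝ) 1,
        (∑' k : ℤ, zterm lam q₁ (⇑h₁) a b k) * conj (∑' l : ℤ, zterm lam q₂ (⇑h₂) a b l))
      = ∑' k : ℤ, eR (-(2 * π * ((q₁:ℝ) - (q₂:ℝ)) * k) / lam) *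
          (h₁ ((k:ℝ)/(lam:ℝ) + a) * conj (h₂ ((k:ℝ)/(lam:ℝ) + a))) := by
  set F : ℤ × ℤ → ℝ → ℂ :=
    fun p b => zterm lam q₁ (⇑h₁) a b p.1 * conj (zterm lam q₂ (⇑h₂) a b p.2) with hF
  set D : ℤ → ℂ := fun k => eR (-(2 * π * q₁ * k) / lam) * conj (eR (-(2 * π * q₂ * k) / lam)) *
      (h₁ ((k:ℝ)/(lam:ℝ) + a) * conj (h₂ ((k:ℝ)/(lam:ℝ) + a))) with hD
  have hs₁ : ∀ b : ℝ, Summable fun k : ℤ => ‖zterm lam q₁ (⇑h₁) a b k‖ := by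
    intro b; simp_rw [zterm_norm]; exact summable_shift h₁ lam hlam ha
  have hs₂ : ∀ b : ℝ, Summable fun k : ℤ => ‖conj (zterm lam q₂ (⇑h₂) a b k)‖ := by
    intro b; simp_rw [RCLike.norm_conj, zterm_norm]; exact summable_shift h₂ lam hlam ha
  -- product of the two series
  have hiP : ∀ b : ℝ, (∑' k : ℤ, zterm lam q₁ (⇑h₁) a b k) *
      conj (∑' l : ℤ, zterm lam q₂ (⇑h₂) a b l) = ∑' p : ℤ × ℤ, F p b := by
    intro b
    rw [starRingEnd_apply, tsum_star]
    rw [tsum_mul_tsum_of_summable_norm (hs₁ b)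
      (by simp_rw [norm_star, zterm_norm]; exact summable_shift h₂ lam hlam ha)]
    exact tsum_congr fun p => by simp only [hF, starRingEnd_apply]
  simp_rw [hiP]
  -- continuity of each term
  have hcont : ∀ p : ℤ × ℤ, Continuous (F p) := by
    intro p
    apply Continuous.mul
    · unfold zterm eR
      fun_prop
    · apply Continuous.comp continuous_conj
      unfold zterm eR
      fun_prop
  have hFnorm : ∀ (p : ℤ × ℤ) (b : ℝ),
      ‖F p b‖ = ‖h₁ ((p.1:ℝ)/(lam:ℝ) + a)‖ * ‖h₂ ((p.2:ℝ)/(lam:ℝ) + a)‖ := by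
    intro p b
    simp only [hF, norm_mul, RCLike.norm_conj, zterm_norm]
  have hprodsum : Summable fun p : ℤ × ℤ =>
      ‖h₁ ((p.1:ℝ)/(lam:ℝ) + a)‖ * ‖h₂ ((p.2:ℝ)/(lam:ℝ) + a)‖ :=
    (summable_shift h₁ lam hlam ha).mul_of_nonneg (summable_shift h₂ lam hlam ha)
      (fun _ => norm_nonneg _) (fun _ => norm_nonneg _)
  -- swap integral and sum
  rw [← MeasureTheory.integral_tsum_of_summable_integral_norm
      (fun p => ((hcont p).integrableOn_Icc))
      (by
        refine hprodsum.congr fun p => ?_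
        simp_rw [hFnorm]
        simp [Real.volume_Icc])]
  -- compute each integral
  have hterm : ∀ p : ℤ × ℤ, (∫ b in Set.Icc (0:ℝ) 1, F p b)
      = if p.2 = p.1 then D p.1 else 0 := by
    intro p
    have hrw : ∀ b : ℝ, F p b =
        (eR (-(2 * π * q₁ * p.1) / lam) * conj (eR (-(2 * π * q₂ * p.2) / lam)) *
          (h₁ ((p.1:ℝ)/(lam:ℝ) + a) * conj (h₂ ((p.2:ℝ)/(lam:ℝ) + a)))) *
        eR (2 * π * ((p.1 - p.2 : ℤ) : ℝ) * b) := by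
      intro b
      simp only [hF, zterm, map_mul, eR_conj]
      rw [show (2 * π * ((p.1 - p.2 : ℤ) : ℝ) * b) = 2 * π * (p.1:ℝ) * b + -(2 * π * (p.2:ℝ) * b) by
        push_cast; ring, eR_add]
      ring
    simp_rw [hrw]
    rw [integral_const_mul, intE]
    by_cases hpe : p.2 = p.1
    · rw [if_pos (by omega), if_pos hpe, hD, hpe]
      ring
    · rw [if_neg (by omega), if_neg hpe, mul_zero]
  simp_rw [hterm]
  -- collapse the double sum
  have hDnorm : ∀ k : ℤ, ‖D k‖ = ‖h₁ ((k:ℝ)/(lam:ℝ) + a)‖ * ‖h₂ ((k:ℝ)/(lam:ℝ) + a)‖ := by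
    intro k
    simp only [hD, norm_mul, RCLike.norm_conj, eR_norm, one_mul]
  have hsum : Summable fun p : ℤ × ℤ => if p.2 = p.1 then D p.1 else 0 := by
    apply Summable.of_norm_bounded hprodsum
    intro p
    by_cases hpe : p.2 = p.1
    · rw [if_pos hpe, hDnorm, hpe]
    · rw [if_neg hpe, norm_zero]
      positivity
  rw [hsum.tsum_prod' hsum.prod_factor]
  apply tsum_congr
  intro k
  rw [show (∑' l : ℤ, if l = k then D k else 0) = D k from tsum_ite_eq k (fun _ => D k)]
  simp only [hD]
  rw [eR_conj, ← eR_add]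
  congr 2
  ring

/-- Step A : the `c`-integral. -/
lemma stepA (lam₁ lam₂ q₁ q₂ : ℤ) (h₁ h₂ : ℝ → ℂ) (a b : ℝ) :
    (∫ c in Set.Icc (0:ℝ) 1, BWZ lam₁ q₁ h₁ (a,b,c) * conj (BWZ lam₂ q₂ h₂ (a,b,c)))
      = (if lam₁ = lam₂ then 1 else 0) *
        (((Real.sqrt |(lam₁ : ℝ)| / (lam₁ : ℝ) : ℝ) : ℂ) *
          ((Real.sqrt |(lam₂ : ℝ)| / (lam₂ : ℝ) : ℝ) : ℂ) *
          ((∑' k : ℤ, zterm lam₁ q₁ h₁ a b k) * conj (∑' l : ℤ, zterm lam₂ q₂ h₂ a b l))) := by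
  have hint : ∀ c : ℝ, BWZ lam₁ q₁ h₁ (a,b,c) * conj (BWZ lam₂ q₂ h₂ (a,b,c)) =
      (((Real.sqrt |(lam₁ : ℝ)| / (lam₁ : ℝ) : ℝ) : ℂ) *
        ((Real.sqrt |(lam₂ : ℝ)| / (lam₂ : ℝ) : ℝ) : ℂ) *
        ((∑' k : ℤ, zterm lam₁ q₁ h₁ a b k) * conj (∑' l : ℤ, zterm lam₂ q₂ h₂ a b l))) *
      eR (2 * π * ((lam₁ - lam₂ : ℤ) : ℝ) * c) := by
    intro c
    rw [BWZ_eq, BWZ_eq, map_mul, map_mul, Complex.conj_ofReal, eR_conj]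
    rw [show (2 * π * ((lam₁ - lam₂ : ℤ) : ℝ) * c)
        = 2 * π * (lam₁:ℝ) * c + -(2 * π * (lam₂:ℝ) * c) by push_cast; ring, eR_add]
    ring
  simp_rw [hint]
  rw [integral_const_mul, intE]
  by_cases h : lam₁ = lam₂
  · simp [h, sub_eq_zero]
  · simp [h, sub_eq_zero]

/-- key summability of integrals of norms -/
lemma key_sum (lam : ℤ) (hlam : lam ≠ 0) (h₁ h₂ : SchwartzMap ℝ ℂ) :
    Summable fun k : ℤ => ∫ a in Set.Icc (0:ℝ) 1,
      ‖h₁ ((k:ℝ)/(lam:ℝ) + a) * conj (h₂ ((k:ℝ)/(lam:ℝ) + a))‖ := by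
  obtain ⟨C₁, hC₁0, hC₁⟩ := bound_shift h₁ lam hlam
  obtain ⟨C₂, hC₂0, hC₂⟩ := schwartz_decay_bound h₂
  have hb : ∀ (k : ℤ) (a : ℝ), a ∈ Set.Icc (0:ℝ) 1 →
      ‖h₁ ((k:ℝ)/(lam:ℝ) + a) * conj (h₂ ((k:ℝ)/(lam:ℝ) + a))‖ ≤ C₁ * C₂ / (1 + (k:ℝ)^2) := by
    intro k a ha
    rw [norm_mul, RCLike.norm_conj]
    have h1 := hC₁ k a ha
    have h2 : ‖h₂ ((k:ℝ)/(lam:ℝ) + a)‖ ≤ C₂ := by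
      have := hC₂ ((k:ℝ)/(lam:ℝ) + a)
      nlinarith [norm_nonneg (h₂ ((k:ℝ)/(lam:ℝ) + a)), sq_nonneg ((k:ℝ)/(lam:ℝ) + a)]
    have hpos : (0:ℝ) < 1 + (k:ℝ)^2 := by positivity
    rw [div_eq_mul_inv] at h1 ⊢
    calc ‖h₁ ((k:ℝ)/(lam:ℝ) + a)‖ * ‖h₂ ((k:ℝ)/(lam:ℝ) + a)‖
        ≤ (C₁ * (1 + (k:ℝ)^2)⁻¹) * C₂ := by
          apply mul_le_mul h1 h2 (norm_nonneg _) (by positivity)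
      _ = C₁ * C₂ * (1 + (k:ℝ)^2)⁻¹ := by ring
  refine Summable.of_nonneg_of_le
    (fun k => integral_nonneg fun a => norm_nonneg _) (fun k => ?_)
    (summable_inv_one_add_sq.mul_left (C₁ * C₂))
  have hfin : volume (Set.Icc (0:ℝ) 1) < ⊤ := by
    rw [Real.volume_Icc]; exact ENNReal.ofReal_lt_top
  calc (∫ a in Set.Icc (0:ℝ) 1, ‖h₁ ((k:ℝ)/(lam:ℝ) + a) * conj (h₂ ((k:ℝ)/(lam:ℝ) + a))‖)
      ≤ ‖∫ a in Set.Icc (0:ℝ) 1, ‖h₁ ((k:ℝ)/(lam:ℝ) + a) * conj (h₂ ((k:ℝ)/(lam:ℝ) + a))‖‖ :=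
        le_abs_self _
    _ ≤ (C₁ * C₂ / (1 + (k:ℝ)^2)) * (volume (Set.Icc (0:ℝ) 1)).toReal := by
        apply norm_setIntegral_le_of_norm_le_const hfin
        · intro a ha
          rw [Real.norm_eq_abs, _root_.abs_of_nonneg (norm_nonneg _)]
          exact hb k a ha
    _ = C₁ * C₂ * (1 / (1 + (k:ℝ)^2)) := by
        rw [Real.volume_Icc]; norm_num [div_eq_mul_inv]

/-- Step C : swap the `a`-integral with the sum. -/
lemma stepC (lam : ℤ) (hlam : lam ≠ 0) (q₁ q₂ : ℤ) (h₁ h₂ : SchwartzMap ℝ ℂ) :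
    (∫ a in Set.Icc (0:ℝ) 1, ∑' k : ℤ, eR (-(2 * π * ((q₁:ℝ) - (q₂:ℝ)) * k) / lam) *
        (h₁ ((k:ℝ)/(lam:ℝ) + a) * conj (h₂ ((k:ℝ)/(lam:ℝ) + a))))
      = ∑' k : ℤ, eR (-(2 * π * ((q₁:ℝ) - (q₂:ℝ)) * k) / lam) *
          (∫ a in Set.Icc (0:ℝ) 1, h₁ ((k:ℝ)/(lam:ℝ) + a) * conj (h₂ ((k:ℝ)/(lam:ℝ) + a))) := by
  have hcont : ∀ k : ℤ, Continuous fun a : ℝ =>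
      eR (-(2 * π * ((q₁:ℝ) - (q₂:ℝ)) * k) / lam) *
        (h₁ ((k:ℝ)/(lam:ℝ) + a) * conj (h₂ ((k:ℝ)/(lam:ℝ) + a))) := by
    intro k
    exact continuous_const.mul ((h₁.continuous.comp (by continuity)).mul
      (Continuous.comp continuous_conj (h₂.continuous.comp (by continuity))))
  rw [← MeasureTheory.integral_tsum_of_summable_integral_norm
      (fun k => ((hcont k).integrableOn_Icc)) ?_]
  · simp_rw [integral_const_mul]
  · refine (key_sum lam hlam h₁ h₂).congr fun k => ?_
    congr 1
    funext a
    conv_rhs => rw [norm_mul, eR_norm, one_mul]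

/-- helper: euclidean facts -/
lemma emod_bounds (lam : ℤ) (hlam : lam ≠ 0) (k : ℤ) :
    0 ≤ k % lam ∧ k % lam < |lam| := by
  refine ⟨Int.emod_nonneg k hlam, ?_⟩
  rcases lt_or_gt_of_ne hlam with hneg | hpos
  · have h1 : k % lam = k % (-lam) := by rw [Int.emod_neg]
    rw [h1, abs_of_neg hneg]
    exact Int.emod_lt_of_pos k (by omega)
  · rw [abs_of_pos hpos]
    exact Int.emod_lt_of_pos k hpos

lemma mod_self_eq (lam : ℤ) (hlam : lam ≠ 0) (x : ℤ) (h0 : 0 ≤ x) (hx : x < |lam|) :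
    x % lam = x := by
  rcases lt_or_gt_of_ne hlam with hneg | hpos
  · rw [show lam = -(-lam) by ring, Int.emod_neg]
    exact Int.emod_eq_of_lt h0 (by rw [abs_of_neg hneg] at hx; omega)
  · exact Int.emod_eq_of_lt h0 (by rwa [abs_of_pos hpos] at hx)

lemma e_bijective (lam : ℤ) (hlam : lam ≠ 0) :
    Function.Bijective (fun p : Fin lam.natAbs × ℤ => lam * p.2 + (p.1 : ℤ)) := by
  constructor
  · rintro ⟨r₁, m₁⟩ ⟨r₂, m₂⟩ heq
    simp only at heq
    have hb₁ : ((r₁ : ℕ) : ℤ) < |lam| := by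
      rw [Int.abs_eq_natAbs]; exact_mod_cast r₁.isLt
    have hb₂ : ((r₂ : ℕ) : ℤ) < |lam| := by
      rw [Int.abs_eq_natAbs]; exact_mod_cast r₂.isLt
    have hmod : ∀ (m : ℤ) (r : ℤ), 0 ≤ r → r < |lam| → (lam * m + r) % lam = r := by
      intro m r h0 hr
      rw [add_comm, Int.add_mul_emod_self_left]
      exact mod_self_eq lam hlam r h0 hr
    have hr : ((r₁ : ℕ) : ℤ) = ((r₂ : ℕ) : ℤ) := by
      have e₁ := hmod m₁ ((r₁ : ℕ) : ℤ) (by positivity) hb₁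
      have e₂ := hmod m₂ ((r₂ : ℕ) : ℤ) (by positivity) hb₂
      rw [← e₁, ← e₂, heq]
    have hrfin : r₁ = r₂ := by
      apply Fin.ext; omega
    subst hrfin
    have hm : m₁ = m₂ := by
      have : lam * m₁ = lam * m₂ := by omega
      exact mul_left_cancel₀ hlam this
    rw [hm]
  · intro k
    obtain ⟨h0, hlt⟩ := emod_bounds lam hlam k
    have habs := Int.abs_eq_natAbs lam
    refine ⟨⟨⟨(k % lam).toNat, by omega⟩, k / lam⟩, ?_⟩
    simp only [Fin.val_mk]
    rw [Int.toNat_of_nonneg h0]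
    exact Int.mul_ediv_add_emod k lam

/-- Step D : reindex over residues and unfold to the full real line. -/
lemma stepD (lam : ℤ) (hlam : lam ≠ 0) (q₁ q₂ : ℤ) (h₁ h₂ : SchwartzMap ℝ ℂ) :
    (∑' k : ℤ, eR (-(2 * π * ((q₁:ℝ) - (q₂:ℝ)) * k) / lam) *
        (∫ a in Set.Icc (0:ℝ) 1, h₁ ((k:ℝ)/(lam:ℝ) + a) * conj (h₂ ((k:ℝ)/(lam:ℝ) + a))))
      = (∑ r : Fin lam.natAbs, eR (-(2 * π * ((q₁:ℝ) - (q₂:ℝ)) * ((r:ℕ):ℝ)) / lam)) *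
          ∫ u : ℝ, h₁ u * conj (h₂ u) := by
  have hlamR : (lam : ℝ) ≠ 0 := Int.cast_ne_zero.mpr hlam
  set g : ℝ → ℂ := fun x => h₁ x * conj (h₂ x) with hg
  -- integrability of g on ℝ
  have hconj : Integrable (fun x : ℝ => conj (h₂ x)) := by
    refine (h₂.integrable (μ := volume)).mono
      ((Continuous.comp continuous_conj h₂.continuous).aestronglyMeasurable)
      (Filter.Eventually.of_forall fun x => ?_)
    rw [RCLike.norm_conj]
  have hg_int : Integrable g := by
    obtain ⟨C, hC0, hC⟩ := schwartz_decay_bound h₁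
    refine hconj.bdd_mul h₁.continuous.aestronglyMeasurable (c := C) (Filter.Eventually.of_forall fun x => ?_)
    have := hC x
    nlinarith [norm_nonneg (h₁ x), sq_nonneg x]
  -- the function F being summed
  set F : ℤ → ℂ := fun k => eR (-(2 * π * ((q₁:ℝ) - (q₂:ℝ)) * k) / lam) *
      (∫ a in Set.Icc (0:ℝ) 1, g ((k:ℝ)/(lam:ℝ) + a)) with hF
  have hFsummable : Summable F := by
    apply Summable.of_norm
    refine Summable.of_nonneg_of_le (fun k => norm_nonneg _) (fun k => ?_)
      (key_sum lam hlam h₁ h₂)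
    rw [hF, norm_mul, eR_norm, one_mul]
    exact norm_integral_le_integral_norm _
  -- reindex
  set e : Fin lam.natAbs × ℤ → ℤ := fun p => lam * p.2 + (p.1 : ℤ) with he
  have hbij : Function.Bijective e := e_bijective lam hlam
  have heq : (Equiv.ofBijective e hbij) = Equiv.ofBijective e hbij := rfl
  rw [show (∑' k : ℤ, F k) = ∑' p : Fin lam.natAbs × ℤ, F (e p) from
    ((Equiv.ofBijective e hbij).tsum_eq F).symm]
  have hFe : Summable fun p : Fin lam.natAbs × ℤ => F (e p) :=
    (Equiv.ofBijective e hbij).summable_iff.mpr hFsummable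
  rw [hFe.tsum_prod' hFe.prod_factor, tsum_fintype]
  -- per-residue computation
  have hres : ∀ r : Fin lam.natAbs,
      (∑' m : ℤ, F (e (r, m)))
        = eR (-(2 * π * ((q₁:ℝ) - (q₂:ℝ)) * ((r:ℕ):ℝ)) / lam) * ∫ u : ℝ, g u := by
    intro r
    set s : ℝ := ((r:ℕ):ℝ) / (lam:ℝ) with hs
    have hterm : ∀ m : ℤ, F (e (r, m))
        = eR (-(2 * π * ((q₁:ℝ) - (q₂:ℝ)) * ((r:ℕ):ℝ)) / lam) *
          ∫ x in (s + (m:ℝ))..(s + (m:ℝ) + 1), g x := by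
      intro m
      rw [hF]
      simp only [he]
      have hphase : (-(2 * π * ((q₁:ℝ) - (q₂:ℝ)) * ((lam * m + (r:ℕ) : ℤ):ℝ)) / lam)
          = 2 * π * (((q₂ - q₁) * m : ℤ):ℝ) +
            (-(2 * π * ((q₁:ℝ) - (q₂:ℝ)) * ((r:ℕ):ℝ)) / lam) := by
        push_cast
        field_simp
        ring
      rw [hphase, eR_add, eR_int, one_mul]
      congr 1
      -- the integral part
      have harg : (((lam * m + (r:ℕ) : ℤ):ℝ) / (lam:ℝ)) = s + (m:ℝ) := by
        rw [hs]; push_cast; field_simp; ring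
      rw [harg]
      have hIcc : (∫ a in Set.Icc (0:ℝ) 1, g ((s + (m:ℝ)) + a))
          = ∫ x in (s + (m:ℝ))..(s + (m:ℝ) + 1), g x := by
        rw [MeasureTheory.integral_Icc_eq_integral_Ioc,
          ← intervalIntegral.integral_of_le (zero_le_one (α := ℝ)),
          intervalIntegral.integral_comp_add_left g (s + (m:ℝ))]
        norm_num
      rw [← hIcc]
    simp_rw [hterm]
    rw [tsum_mul_left]
    congr 1
    exact (hg_int.hasSum_intervalIntegral s).tsum_eq
  rw [Finset.sum_congr rfl (fun r _ => hres r), ← Finset.sum_mul]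

/-- The geometric character sum over residues. -/
lemma geomSum (lam : ℤ) (hlam : lam ≠ 0) (q₁ q₂ : ℤ) :
    (∑ r : Fin lam.natAbs, eR (-(2 * π * ((q₁:ℝ) - (q₂:ℝ)) * ((r:ℕ):ℝ)) / lam))
      = if q₁ ≡ q₂ [ZMOD lam] then (lam.natAbs : ℂ) else 0 := by
  have hlamR : (lam : ℝ) ≠ 0 := Int.cast_ne_zero.mpr hlam
  have h2π : (2 * π : ℝ) ≠ 0 := by positivity
  set ω : ℂ := eR (-(2 * π * ((q₁:ℝ) - (q₂:ℝ))) / lam) with hω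
  have hterm : ∀ r : Fin lam.natAbs,
      eR (-(2 * π * ((q₁:ℝ) - (q₂:ℝ)) * ((r:ℕ):ℝ)) / lam) = ω ^ (r:ℕ) := by
    intro r
    rw [hω, eR_pow]
    congr 1
    ring
  rw [Finset.sum_congr rfl (fun r _ => hterm r)]
  rw [Fin.sum_univ_eq_sum_range (fun i => ω ^ i) lam.natAbs]
  by_cases hq : q₁ ≡ q₂ [ZMOD lam]
  · rw [if_pos hq]
    obtain ⟨d, hd⟩ := Int.ModEq.dvd hq
    have hcast : (q₂:ℝ) - (q₁:ℝ) = (lam:ℝ) * (d:ℝ) := by exact_mod_cast hd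
    have hω1 : ω = 1 := by
      rw [hω, show (-(2 * π * ((q₁:ℝ) - (q₂:ℝ))) / lam) = 2 * π * (d:ℝ) by
        rw [div_eq_iff hlamR]; linear_combination (2*π) * hcast, eR_int]
    simp [hω1]
  · rw [if_neg hq]
    have hω1 : ω ≠ 1 := by
      intro hcontra
      rw [hω] at hcontra
      unfold eR at hcontra
      rw [Complex.exp_eq_one_iff] at hcontra
      obtain ⟨z, hz⟩ := hcontra
      have h2 : (z:ℂ) * (2 * (π:ℂ) * Complex.I) = ((2 * π * (z:ℝ) : ℝ) : ℂ) * Complex.I := by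
        push_cast; ring
      rw [h2] at hz
      have hre : (-(2 * π * ((q₁:ℝ) - (q₂:ℝ))) / lam) = 2 * π * (z:ℝ) :=
        Complex.ofReal_injective (mul_right_cancel₀ Complex.I_ne_zero hz)
      have h5 : 2 * π * (-((q₁:ℝ) - (q₂:ℝ))) = 2 * π * ((z:ℝ) * (lam:ℝ)) := by
        rw [div_eq_iff hlamR] at hre
        linarith [hre]
      have h6 := mul_left_cancel₀ h2π h5
      have h7 : (q₂:ℝ) - (q₁:ℝ) = ((z * lam : ℤ) : ℝ) := by push_cast; linarith
      have h8 : q₂ - q₁ = z * lam := by exact_mod_cast h7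
      exact hq (Int.ModEq.symm (Int.modEq_iff_dvd.mpr ⟨z, by linarith [h8]⟩).symm)
    have hωn : ω ^ lam.natAbs = 1 := by
      rw [hω, eR_pow]
      rcases Int.natAbs_eq lam with hpos | hneg
      · have hcastn : ((lam.natAbs : ℕ) : ℝ) = (lam : ℝ) := by
          have h0 : (0:ℤ) ≤ lam := by omega
          have h0R : (0:ℝ) ≤ (lam:ℝ) := by exact_mod_cast h0
          rw [Nat.cast_natAbs, Int.cast_abs]
          exact _root_.abs_of_nonneg h0R
        rw [show ((lam.natAbs : ℕ) : ℝ) * (-(2 * π * ((q₁:ℝ) - (q₂:ℝ))) / lam)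
            = 2 * π * (((q₂ - q₁ : ℤ)):ℝ) by rw [hcastn]; push_cast; field_simp; ring]
        exact eR_int _
      · have hcastn : ((lam.natAbs : ℕ) : ℝ) = -(lam : ℝ) := by
          have h0 : lam ≤ 0 := by omega
          have h0R : (lam:ℝ) ≤ 0 := by exact_mod_cast h0
          rw [Nat.cast_natAbs, Int.cast_abs]
          exact _root_.abs_of_nonpos h0R
        rw [show ((lam.natAbs : ℕ) : ℝ) * (-(2 * π * ((q₁:ℝ) - (q₂:ℝ))) / lam)
            = 2 * π * (((q₁ - q₂ : ℤ)):ℝ) by rw [hcastn]; push_cast; field_simp]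
        exact eR_int _
    rw [geom_sum_eq hω1, hωn]
    simp

/-- **Orthogonality and unitarity relations for the Berezin–Weil–Zak transform.** -/
theorem BWZ_orthogonality (lam₁ lam₂ : ℤ) (hlam₁ : lam₁ ≠ 0) (hlam₂ : lam₂ ≠ 0)
    (q₁ q₂ : ℤ) (h₁ h₂ : SchwartzMap ℝ ℂ) :
    (∫ a in Set.Icc (0:ℝ) 1, ∫ b in Set.Icc (0:ℝ) 1, ∫ c in Set.Icc (0:ℝ) 1,
        BWZ lam₁ q₁ (⇑h₁) (a, b, c) * conj (BWZ lam₂ q₂ (⇑h₂) (a, b, c)))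
      = if lam₁ = lam₂ ∧ q₁ ≡ q₂ [ZMOD lam₁] then ∫ u : ℝ, h₁ u * conj (h₂ u) else 0 := by
  simp_rw [stepA]
  by_cases hll : lam₁ = lam₂
  · subst hll
    simp only [eq_self_iff_true, if_true, one_mul, true_and]
    simp_rw [integral_const_mul]
    rw [MeasureTheory.setIntegral_congr_fun measurableSet_Icc
      (fun a ha => stepB lam₁ hlam₁ q₁ q₂ h₁ h₂ ha)]
    rw [stepC lam₁ hlam₁ q₁ q₂ h₁ h₂, stepD lam₁ hlam₁ q₁ q₂ h₁ h₂, geomSum lam₁ hlam₁ q₁ q₂]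
    by_cases hq : q₁ ≡ q₂ [ZMOD lam₁]
    · rw [if_pos hq, if_pos hq]
      have hlamR : (lam₁ : ℝ) ≠ 0 := Int.cast_ne_zero.mpr hlam₁
      have h1 : Real.sqrt |(lam₁:ℝ)| * Real.sqrt |(lam₁:ℝ)| = |(lam₁:ℝ)| :=
        Real.mul_self_sqrt (abs_nonneg _)
      have h2 : |(lam₁:ℝ)| * |(lam₁:ℝ)| = (lam₁:ℝ) * (lam₁:ℝ) := abs_mul_abs_self _
      have hreal : (Real.sqrt |(lam₁:ℝ)| / (lam₁:ℝ)) * (Real.sqrt |(lam₁:ℝ)| / (lam₁:ℝ)) *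
          ((lam₁.natAbs : ℕ) : ℝ) = 1 := by
        have h3 : ((lam₁.natAbs : ℕ) : ℝ) = |(lam₁:ℝ)| := by
          rw [Nat.cast_natAbs, Int.cast_abs]
        rw [h3]
        calc (Real.sqrt |(lam₁:ℝ)| / (lam₁:ℝ)) * (Real.sqrt |(lam₁:ℝ)| / (lam₁:ℝ)) * |(lam₁:ℝ)|
            = (Real.sqrt |(lam₁:ℝ)| * Real.sqrt |(lam₁:ℝ)|) * |(lam₁:ℝ)| / ((lam₁:ℝ) * (lam₁:ℝ)) := by
              ring
          _ = (|(lam₁:ℝ)| * |(lam₁:ℝ)|) / ((lam₁:ℝ) * (lam₁:ℝ)) := by rw [h1]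
          _ = ((lam₁:ℝ) * (lam₁:ℝ)) / ((lam₁:ℝ) * (lam₁:ℝ)) := by rw [h2]
          _ = 1 := div_self (mul_ne_zero hlamR hlamR)
      have hK : ((Real.sqrt |(lam₁:ℝ)| / (lam₁:ℝ) : ℝ) : ℂ) *
          ((Real.sqrt |(lam₁:ℝ)| / (lam₁:ℝ) : ℝ) : ℂ) * ((lam₁.natAbs : ℕ) : ℂ) = 1 := by
        exact_mod_cast hreal
      linear_combination (∫ u : ℝ, h₁ u * conj (h₂ u)) * hK
    · rw [if_neg hq, if_neg hq]
      ring
  · simp [hll]
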